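/- With the notation below, the following identities hold in p_m: [X_{αi}, X_{βω}] = 0 for 1 ≤ i ≤ n−1; [X_{ij}, X_{βω}] = 0 for 1 ≤ i < j ≤ n; for all 1 ≤ i ≤ n−1 and 1 ≤ k ≤ n, [X_{αi}, X_{kβ}] = −δ_{ik}[X_{αβ}, X_{kβ}]; and for all 1 ≤ i < j ≤ n and 1 ≤ k ≤ n, [X_{ij}, X_{kβ}] = −[δ_{ik} X_{jβ} + δ_{jk} X_{iβ}, X_{kβ}]. Consequently, the adjoint action of the Lie subalgebra s(p_{m−1}) on the Lie subalgebra f_{m−2} generated by X_{1β},…,X_{nβ}, X_{βω} is by tangential derivations (each generator X_{kβ} is sent to a bracket [X_{kβ}, v] with v ∈ f_{m−2}), and X_{βω} is annihilated by this action. -/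

import Mathlib

open scoped BigOperators

/-- The set of strand labels `S = {α, 1, …, n, β, ω}`. -/
inductive Strand (n : ℕ) : Type
  | alpha : Strand n
  | num : Fin n → Strand n
  | beta : Strand n
  | omega : Strand n
  deriving DecidableEq

instance (n : ℕ) : Fintype (Strand n) := by
  classical
  exact Fintype.ofSurjective
    (fun s : Option (Option (Option (Fin n))) =>
      match s with
      | none => Strand.alpha
      | some none => Strand.beta
      | some (some none) => Strand.omega
      | some (some (some i)) => Strand.num i)
    (by rintro (_ | i | _ | _)
        · exact ⟨none, rfl⟩
        · exact ⟨some (some (some i)), rfl⟩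
        · exact ⟨some none, rfl⟩
        · exact ⟨some (some none), rfl⟩)

/-- The free Lie algebra on the generators `X_{ab}`, `a, b ∈ S`. -/
abbrev FL (n : ℕ) : Type := FreeLieAlgebra ℂ (Strand n × Strand n)

/-- The generator `X_{ab}` of the free Lie algebra. -/
noncomputable def XF (n : ℕ) (a b : Strand n) : FL n := FreeLieAlgebra.of ℂ (a, b)

/-- The defining relations of `p_m`: the generators `X_{aa}` (we present `p_m` using
generators indexed by all ordered pairs, so the diagonal generators are set to zero),
the symmetry relations `X_{ab} = X_{ba}`, the linear relations `Σ_{b ≠ a} X_{ab} = 0`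
and the commutation relations `[X_{ab}, X_{cd}] = 0` for `a, b, c, d` pairwise distinct. -/
noncomputable def pmRel (n : ℕ) : Set (FL n) :=
  {w | ∃ a, w = XF n a a} ∪
  {w | ∃ a b, w = XF n a b - XF n b a} ∪
  {w | ∃ a, w = ∑ b ∈ Finset.univ.filter (fun b => b ≠ a), XF n a b} ∪
  {w | ∃ a b c d, a ≠ b ∧ a ≠ c ∧ a ≠ d ∧ b ≠ c ∧ b ≠ d ∧ c ≠ d ∧
    w = ⁅XF n a b, XF n c d⁆}

noncomputable def pmIdeal (n : ℕ) : LieIdeal ℂ (FL n) :=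
  LieSubmodule.lieSpan ℂ (FL n) (pmRel n)

/-- The Lie algebra `p_m` of infinitesimal spherical pure braids, `m = n + 3`. -/
abbrev P (n : ℕ) : Type := FL n ⧸ pmIdeal n

/-- The image `X_{ab}` of a generator in `p_m`. -/
noncomputable def X (n : ℕ) (a b : Strand n) : P n :=
  LieSubmodule.Quotient.mk (N := pmIdeal n) (XF n a b)

/-- `X_{βω} := Σ_{i=1}^n X_{αi} + Σ_{1≤i<j≤n} X_{ij}`. -/
noncomputable def Xbw (n : ℕ) : P n :=
  (∑ i : Fin n, X n Strand.alpha (Strand.num i)) +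
    ∑ i : Fin n, ∑ j : Fin n, if i < j then X n (Strand.num i) (Strand.num j) else 0

/-- The Lie subalgebra `f_{m−2}` of `p_m`, generated by `X_{1β}, …, X_{nβ}, X_{βω}`. -/
noncomputable def fSub (n : ℕ) : LieSubalgebra ℂ (P n) :=
  LieSubalgebra.lieSpan ℂ (P n)
    ({w | ∃ i : Fin n, w = X n (Strand.num i) Strand.beta} ∪ {Xbw n})

/-- The Lie subalgebra `s(p_{m−1})` of `p_m`, generated by the `X_{αi}` (`1 ≤ i ≤ n−1`)
and the `X_{ij}` (`1 ≤ i < j ≤ n`). -/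
noncomputable def sSub (n : ℕ) : LieSubalgebra ℂ (P n) :=
  LieSubalgebra.lieSpan ℂ (P n)
    ({w | ∃ i : Fin n, (i : ℕ) + 1 < n ∧ w = X n Strand.alpha (Strand.num i)} ∪
     {w | ∃ i j : Fin n, i < j ∧ w = X n (Strand.num i) (Strand.num j)})

abbrev UP (n : ℕ) : Type := UniversalEnvelopingAlgebra ℂ (P n)

attribute [local instance 100] LieRing.ofAssociativeRing

noncomputable def ιP (n : ℕ) : P n →ₗ⁅ℂ⁆ UP n := UniversalEnvelopingAlgebra.ι ℂ

/-- The subalgebra `U f_{m−2} ⊆ U p_m`, generated by the image of `f_{m−2}`. -/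
noncomputable def UfSub (n : ℕ) : Subalgebra ℂ (UP n) :=
  Algebra.adjoin ℂ (ιP n '' (fSub n : Set (P n)))

section Aux

open Strand Finset

variable {n : ℕ}

noncomputable def mkL (n : ℕ) : FL n →ₗ[ℂ] P n := (pmIdeal n).toSubmodule.mkQ

lemma X_eq (a b : Strand n) : X n a b = mkL n (XF n a b) := rfl

lemma mk_rel_zero {w : FL n} (h : w ∈ pmRel n) : mkL n w = 0 :=
  LieSubmodule.Quotient.mk_eq_zero'.mpr (LieSubmodule.subset_lieSpan h)

lemma X_diag (a : Strand n) : X n a a = 0 :=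
  mk_rel_zero (Or.inl (Or.inl (Or.inl ⟨a, rfl⟩)))

lemma X_symm (a b : Strand n) : X n a b = X n b a := by
  rw [← sub_eq_zero, X_eq, X_eq, ← map_sub]
  exact mk_rel_zero (Or.inl (Or.inl (Or.inr ⟨a, b, rfl⟩)))

lemma X_comm {a b c d : Strand n} (hab : a ≠ b) (hac : a ≠ c) (had : a ≠ d)
    (hbc : b ≠ c) (hbd : b ≠ d) (hcd : c ≠ d) :
    ⁅X n a b, X n c d⁆ = 0 := by
  have h : ⁅X n a b, X n c d⁆ = mkL n ⁅XF n a b, XF n c d⁆ :=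
    (LieSubmodule.Quotient.mk_bracket (I := pmIdeal n) _ _).symm
  rw [h]
  exact mk_rel_zero (Or.inr ⟨a, b, c, d, hab, hac, had, hbc, hbd, hcd, rfl⟩)

lemma X_row_filter (a : Strand n) :
    ∑ b ∈ Finset.univ.filter (fun b => b ≠ a), X n a b = 0 := by
  have : ∑ b ∈ Finset.univ.filter (fun b => b ≠ a), X n a b =
      mkL n (∑ b ∈ Finset.univ.filter (fun b => b ≠ a), XF n a b) :=
    (map_sum (mkL n) _ _).symm
  rw [this]
  exact mk_rel_zero (Or.inl (Or.inr ⟨a, rfl⟩))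

lemma X_row_univ (a : Strand n) : ∑ b : Strand n, X n a b = 0 := by
  rw [← Finset.sum_filter_add_sum_filter_not Finset.univ (fun b => b ≠ a) (X n a)]
  rw [X_row_filter, zero_add]
  refine Finset.sum_eq_zero fun b hb => ?_
  rcases Finset.mem_filter.mp hb with ⟨-, h⟩
  rw [not_ne_iff.mp h]
  exact X_diag a

end Aux
section Aux2

open Strand Finset

variable {n : ℕ}

/-- Equivalence used to decompose sums over `Strand n`. -/
def strandEquiv (n : ℕ) : Option (Option (Option (Fin n))) ≃ Strand n where
  toFun s := match s with
    | none => .alpha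
    | some none => .beta
    | some (some none) => .omega
    | some (some (some i)) => .num i
  invFun s := match s with
    | .alpha => none
    | .beta => some none
    | .omega => some (some none)
    | .num i => some (some (some i))
  left_inv := by rintro (_ | _ | _ | i) <;> rfl
  right_inv := by rintro (_ | i | _ | _) <;> rfl

lemma sum_strand {M : Type*} [AddCommMonoid M] (f : Strand n → M) :
    ∑ b : Strand n, f b =
      f .alpha + f .beta + f .omega + ∑ i : Fin n, f (.num i) := by
  rw [← Equiv.sum_comp (strandEquiv n) f]
  rw [Fintype.sum_option, Fintype.sum_option, Fintype.sum_option]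
  show f .alpha + (f .beta + (f .omega + ∑ i, f (.num i))) = _
  abel

lemma rowA : X n .alpha .beta + X n .alpha .omega
    + ∑ i : Fin n, X n .alpha (.num i) = 0 := by
  have h := X_row_univ (n := n) .alpha
  rw [sum_strand, X_diag, zero_add] at h
  exact h

lemma rowB : X n .alpha .beta + X n .beta .omega
    + ∑ i : Fin n, X n (.num i) .beta = 0 := by
  have h := X_row_univ (n := n) .beta
  rw [sum_strand, X_diag, add_zero, X_symm .beta .alpha,
    Finset.sum_congr rfl (fun i _ => X_symm (n := n) .beta (.num i))] at h
  exact h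

lemma rowO : X n .alpha .omega + X n .beta .omega
    + ∑ i : Fin n, X n (.num i) .omega = 0 := by
  have h := X_row_univ (n := n) .omega
  rw [sum_strand, X_diag, add_zero, X_symm .omega .alpha, X_symm .omega .beta,
    Finset.sum_congr rfl (fun i _ => X_symm (n := n) .omega (.num i))] at h
  exact h

lemma rowN (k : Fin n) : X n .alpha (.num k) + X n (.num k) .beta + X n (.num k) .omega
    + ∑ j : Fin n, X n (.num k) (.num j) = 0 := by
  have h := X_row_univ (n := n) (.num k)
  rw [sum_strand, X_symm (.num k) .alpha] at h
  -- h : X α (num k) + X (num k) β + X (num k) ω + ∑ j, X (num k) (num j) = 0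
  -- but order: f .alpha + f .beta + f .omega + ∑ : f = X n (.num k)
  exact h

end Aux2
section Aux3

open Strand Finset

variable {n : ℕ}

lemma double_sum_eq :
    ∑ i : Fin n, ∑ j : Fin n, X n (.num i) (.num j) =
      (∑ i : Fin n, ∑ j : Fin n, if i < j then X n (.num i) (.num j) else 0) +
      (∑ i : Fin n, ∑ j : Fin n, if i < j then X n (.num i) (.num j) else 0) := by
  have key : ∀ i j : Fin n, X n (.num i) (.num j) =
      (if i < j then X n (.num i) (.num j) else 0) +
      (if j < i then X n (.num i) (.num j) else 0) := by
    intro i j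
    rcases lt_trichotomy i j with h | h | h
    · rw [if_pos h, if_neg (asymm h), add_zero]
    · rw [if_neg h.not_lt, if_neg h.symm.not_lt, ← h, X_diag, add_zero]
    · rw [if_neg (asymm h), if_pos h, zero_add]
  calc ∑ i : Fin n, ∑ j : Fin n, X n (.num i) (.num j)
      = ∑ i : Fin n, ∑ j : Fin n,
          ((if i < j then X n (.num i) (.num j) else 0) +
           (if j < i then X n (.num i) (.num j) else 0)) := by
        exact Finset.sum_congr rfl fun i _ => Finset.sum_congr rfl fun j _ => key i j
    _ = (∑ i : Fin n, ∑ j : Fin n, if i < j then X n (.num i) (.num j) else 0) +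
        (∑ i : Fin n, ∑ j : Fin n, if j < i then X n (.num i) (.num j) else 0) := by
        rw [← Finset.sum_add_distrib]
        exact Finset.sum_congr rfl fun i _ => Finset.sum_add_distrib
    _ = _ := by
        congr 1
        rw [Finset.sum_comm]
        exact Finset.sum_congr rfl fun j _ => Finset.sum_congr rfl fun i _ => by
          by_cases h : j < i
          · rw [if_pos h, if_pos h, X_symm]
          · rw [if_neg h, if_neg h]

lemma sum_rows :
    (∑ i : Fin n, X n .alpha (.num i)) + (∑ i : Fin n, X n (.num i) .beta) +
      (∑ i : Fin n, X n (.num i) .omega) +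
      (∑ i : Fin n, ∑ j : Fin n, X n (.num i) (.num j)) = 0 := by
  have h : ∑ i : Fin n, (X n .alpha (.num i) + X n (.num i) .beta + X n (.num i) .omega
      + ∑ j : Fin n, X n (.num i) (.num j)) = 0 :=
    Finset.sum_eq_zero fun i _ => rowN i
  rw [Finset.sum_add_distrib, Finset.sum_add_distrib, Finset.sum_add_distrib] at h
  exact h

lemma Xbw_eq : Xbw n = X n .beta .omega := by
  have e1 := rowA (n := n)
  have e2 := rowB (n := n)
  have e3 := rowO (n := n)
  have e4 := sum_rows (n := n)
  have e5 := double_sum_eq (n := n)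
  have key : (2 : ℂ) • Xbw n = (2 : ℂ) • X n .beta .omega := by
    unfold Xbw
    linear_combination (norm := module) e1 - e2 - e3 + e4 - e5
  exact smul_right_injective (P n) two_ne_zero key

end Aux3
section Aux4

open Strand Finset

variable {n : ℕ}

lemma lie_sum' {L : Type*} [LieRing L] (x : L) {ι : Type*} (s : Finset ι) (f : ι → L) :
    ⁅x, ∑ i ∈ s, f i⁆ = ∑ i ∈ s, ⁅x, f i⁆ := by
  classical
  induction s using Finset.induction with
  | empty => simp
  | insert _ _ h ih => rw [Finset.sum_insert h, Finset.sum_insert h, lie_add, ih]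

/-- The four-term relation: for pairwise distinct `a, b, c`,
`[X_{ab}, X_{ca} + X_{cb}] = 0`. -/
lemma four_term {a b c : Strand n} (hab : a ≠ b) (hac : a ≠ c) (hbc : b ≠ c) :
    ⁅X n a b, X n c a + X n c b⁆ = 0 := by
  classical
  have h0 : ∑ d : Strand n, ⁅X n a b, X n c d⁆ = 0 := by
    rw [← lie_sum', X_row_univ, lie_zero]
  have h1 : ∑ d ∈ ({a, b} : Finset (Strand n)), ⁅X n a b, X n c d⁆ =
      ∑ d : Strand n, ⁅X n a b, X n c d⁆ := by
    refine Finset.sum_subset (Finset.subset_univ _) fun d _ hd => ?_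
    simp only [Finset.mem_insert, Finset.mem_singleton, not_or] at hd
    by_cases hdc : d = c
    · rw [hdc, X_diag, lie_zero]
    · exact X_comm hab hac (Ne.symm hd.1) hbc (Ne.symm hd.2) (Ne.symm hdc)
  rw [Finset.sum_pair hab, h0] at h1
  rw [lie_add]
  exact h1

lemma lem3' (k : Fin n) :
    ⁅X n .alpha (.num k), X n (.num k) .beta⁆ =
      -⁅X n .alpha .beta, X n (.num k) .beta⁆ := by
  have h := four_term (n := n) (a := .num k) (b := .beta) (c := .alpha)
    (by simp) (by simp) (by simp)
  rw [lie_add] at h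
  rw [← lie_skew, ← lie_skew (X n .alpha .beta)]
  rw [eq_comm, neg_neg, ← sub_eq_zero, sub_neg_eq_add, add_comm]
  exact h

lemma lem4a {i j : Fin n} (hij : i ≠ j) :
    ⁅X n (.num i) (.num j), X n (.num i) .beta⁆ =
      -⁅X n (.num j) .beta, X n (.num i) .beta⁆ := by
  have h := four_term (n := n) (a := .num i) (b := .beta) (c := .num j)
    (by simp) (by simpa using hij) (by simp)
  rw [lie_add] at h
  rw [X_symm (.num i) (.num j)]
  rw [← lie_skew, ← lie_skew (X n (.num j) .beta)]
  rw [eq_comm, neg_neg, ← sub_eq_zero, sub_neg_eq_add, add_comm]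
  exact h

lemma lem4b {i j : Fin n} (hij : i ≠ j) :
    ⁅X n (.num i) (.num j), X n (.num j) .beta⁆ =
      -⁅X n (.num i) .beta, X n (.num j) .beta⁆ := by
  rw [X_symm (.num i) (.num j)]
  exact lem4a hij.symm

end Aux4
section Aux5

open Strand Finset

variable {n : ℕ}

lemma mem_fSub_X (k : Fin n) : X n (.num k) .beta ∈ fSub n :=
  LieSubalgebra.subset_lieSpan (Or.inl ⟨k, rfl⟩)

lemma mem_fSub_Xbw : Xbw n ∈ fSub n :=
  LieSubalgebra.subset_lieSpan (Or.inr rfl)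

lemma Xab_eq : X n .alpha .beta = -Xbw n - ∑ i : Fin n, X n (.num i) .beta := by
  have h := rowB (n := n)
  rw [← Xbw_eq] at h
  linear_combination (norm := module) h

lemma mem_fSub_Xab : X n .alpha .beta ∈ fSub n := by
  rw [Xab_eq]
  exact sub_mem (neg_mem mem_fSub_Xbw) (sum_mem fun i _ => mem_fSub_X i)

/-- The centralizer of an element, as a Lie subalgebra. -/
noncomputable def cent (n : ℕ) (x : P n) : LieSubalgebra ℂ (P n) where
  carrier := {w | ⁅w, x⁆ = 0}
  add_mem' := fun {a b} ha hb => by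
    simp only [Set.mem_setOf_eq] at *
    rw [add_lie, ha, hb, add_zero]
  zero_mem' := zero_lie x
  smul_mem' := fun c a ha => by
    simp only [Set.mem_setOf_eq] at *
    rw [smul_lie, ha, smul_zero]
  lie_mem' := fun {a b} ha hb => by
    simp only [Set.mem_setOf_eq] at *
    rw [lie_lie, ha, hb, lie_zero, lie_zero, sub_zero]

lemma mem_cent {x w : P n} : w ∈ cent n x ↔ ⁅w, x⁆ = 0 := Iff.rfl

/-- The elements of `fSub` whose bracket with `w` stays in `fSub`. -/
noncomputable def adSet (n : ℕ) (w : P n) : LieSubalgebra ℂ (P n) where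
  carrier := {x | x ∈ fSub n ∧ ⁅w, x⁆ ∈ fSub n}
  add_mem' := fun {a b} ha hb =>
    ⟨add_mem ha.1 hb.1, by rw [lie_add]; exact add_mem ha.2 hb.2⟩
  zero_mem' := ⟨zero_mem _, by rw [lie_zero]; exact zero_mem _⟩
  smul_mem' := fun c a ha =>
    ⟨(fSub n).smul_mem c ha.1, by rw [lie_smul]; exact (fSub n).smul_mem c ha.2⟩
  lie_mem' := fun {a b} ha hb =>
    ⟨(fSub n).lie_mem ha.1 hb.1, by
      rw [leibniz_lie]
      exact add_mem ((fSub n).lie_mem ha.2 hb.1) ((fSub n).lie_mem ha.1 hb.2)⟩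

lemma ad_preserves {w : P n} (h1 : ∀ k : Fin n, ⁅w, X n (.num k) .beta⁆ ∈ fSub n)
    (h2 : ⁅w, Xbw n⁆ ∈ fSub n) : ∀ x ∈ fSub n, ⁅w, x⁆ ∈ fSub n := by
  have hle : fSub n ≤ adSet n w := by
    apply LieSubalgebra.lieSpan_le.mpr
    rintro x (⟨k, rfl⟩ | rfl)
    · exact ⟨mem_fSub_X k, h1 k⟩
    · exact ⟨mem_fSub_Xbw, h2⟩
  exact fun x hx => (hle hx).2

/-- The set of `w` acting tangentially on `fSub`, as a Lie subalgebra. -/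
noncomputable def Dsub (n : ℕ) : LieSubalgebra ℂ (P n) where
  carrier := {w | (∀ x ∈ fSub n, ⁅w, x⁆ ∈ fSub n) ∧
      ∀ k : Fin n, ∃ v ∈ fSub n,
        ⁅w, X n (.num k) .beta⁆ = ⁅X n (.num k) .beta, v⁆}
  zero_mem' := ⟨fun x _ => by rw [zero_lie]; exact zero_mem _,
    fun k => ⟨0, zero_mem _, by rw [zero_lie, lie_zero]⟩⟩
  add_mem' := fun {a b} ha hb => by
    refine ⟨fun x hx => by rw [add_lie]; exact add_mem (ha.1 x hx) (hb.1 x hx), fun k => ?_⟩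
    obtain ⟨v1, hv1, e1⟩ := ha.2 k
    obtain ⟨v2, hv2, e2⟩ := hb.2 k
    exact ⟨v1 + v2, add_mem hv1 hv2, by rw [add_lie, e1, e2, lie_add]⟩
  smul_mem' := fun c a ha => by
    refine ⟨fun x hx => by rw [smul_lie]; exact (fSub n).smul_mem c (ha.1 x hx), fun k => ?_⟩
    obtain ⟨v, hv, e⟩ := ha.2 k
    exact ⟨c • v, (fSub n).smul_mem c hv, by rw [smul_lie, e, lie_smul]⟩
  lie_mem' := fun {a b} ha hb => by
    refine ⟨fun x hx => by
      rw [lie_lie]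
      exact sub_mem (ha.1 _ (hb.1 x hx)) (hb.1 _ (ha.1 x hx)), fun k => ?_⟩
    obtain ⟨v1, hv1, e1⟩ := ha.2 k
    obtain ⟨v2, hv2, e2⟩ := hb.2 k
    set Xk := X n (.num k) .beta with hXk
    refine ⟨⁅v1, v2⁆ + ⁅a, v2⁆ - ⁅b, v1⁆,
      sub_mem (add_mem ((fSub n).lie_mem hv1 hv2) (ha.1 v2 hv2)) (hb.1 v1 hv1), ?_⟩
    have hA : ⁅⁅Xk, v1⁆, v2⁆ = ⁅Xk, ⁅v1, v2⁆⁆ + ⁅⁅Xk, v2⁆, v1⁆ := by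
      rw [lie_lie Xk v1 v2, sub_eq_add_neg, lie_skew]
    calc ⁅⁅a, b⁆, Xk⁆ = ⁅a, ⁅b, Xk⁆⁆ - ⁅b, ⁅a, Xk⁆⁆ := lie_lie a b Xk
      _ = ⁅a, ⁅Xk, v2⁆⁆ - ⁅b, ⁅Xk, v1⁆⁆ := by rw [e1, e2]
      _ = (⁅⁅a, Xk⁆, v2⁆ + ⁅Xk, ⁅a, v2⁆⁆) - (⁅⁅b, Xk⁆, v1⁆ + ⁅Xk, ⁅b, v1⁆⁆) := by
          rw [leibniz_lie a Xk v2, leibniz_lie b Xk v1]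
      _ = (⁅⁅Xk, v1⁆, v2⁆ + ⁅Xk, ⁅a, v2⁆⁆) - (⁅⁅Xk, v2⁆, v1⁆ + ⁅Xk, ⁅b, v1⁆⁆) := by
          rw [e1, e2]
      _ = ⁅Xk, ⁅v1, v2⁆ + ⁅a, v2⁆ - ⁅b, v1⁆⁆ := by
          rw [hA, lie_sub, lie_add]
          abel

lemma mem_Dsub {w : P n} : w ∈ Dsub n ↔
    (∀ x ∈ fSub n, ⁅w, x⁆ ∈ fSub n) ∧
      ∀ k : Fin n, ∃ v ∈ fSub n,
        ⁅w, X n (.num k) .beta⁆ = ⁅X n (.num k) .beta, v⁆ := Iff.rfl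

end Aux5
section Aux6

open Strand Finset

variable {n : ℕ}

lemma bw_comm_alpha (i : Fin n) : ⁅X n .alpha (.num i), Xbw n⁆ = 0 := by
  rw [Xbw_eq]
  exact X_comm (by simp) (by simp) (by simp) (by simp) (by simp) (by simp)

lemma bw_comm_num {i j : Fin n} (hij : i ≠ j) :
    ⁅X n (.num i) (.num j), Xbw n⁆ = 0 := by
  rw [Xbw_eq]
  exact X_comm (by simpa using hij) (by simp) (by simp) (by simp) (by simp) (by simp)

lemma genA_mem_Dsub (i : Fin n) : X n .alpha (.num i) ∈ Dsub n := by
  have h1 : ∀ k : Fin n, ⁅X n .alpha (.num i), X n (.num k) .beta⁆ ∈ fSub n := by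
    intro k
    by_cases h : i = k
    · subst h
      rw [lem3']
      exact neg_mem ((fSub n).lie_mem mem_fSub_Xab (mem_fSub_X i))
    · rw [X_comm (by simp) (by simp) (by simp) (by simpa using h) (by simp) (by simp)]
      exact zero_mem _
  refine ⟨ad_preserves h1 ((bw_comm_alpha i) ▸ zero_mem _), fun k => ?_⟩
  by_cases h : i = k
  · subst h
    refine ⟨X n .alpha .beta, mem_fSub_Xab, ?_⟩
    rw [lem3']
    exact lie_skew (X n (.num i) .beta) (X n .alpha .beta)
  · exact ⟨0, zero_mem _, by
      rw [lie_zero,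
        X_comm (by simp) (by simp) (by simp) (by simpa using h) (by simp) (by simp)]⟩

lemma genN_mem_Dsub {i j : Fin n} (hij : i < j) : X n (.num i) (.num j) ∈ Dsub n := by
  have h1 : ∀ k : Fin n, ⁅X n (.num i) (.num j), X n (.num k) .beta⁆ ∈ fSub n := by
    intro k
    by_cases hik : i = k
    · subst hik
      rw [lem4a hij.ne]
      exact neg_mem ((fSub n).lie_mem (mem_fSub_X j) (mem_fSub_X i))
    · by_cases hjk : j = k
      · subst hjk
        rw [lem4b hij.ne]
        exact neg_mem ((fSub n).lie_mem (mem_fSub_X i) (mem_fSub_X j))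
      · rw [X_comm (by simpa using hij.ne) (by simpa using hik) (by simp)
          (by simpa using hjk) (by simp) (by simp)]
        exact zero_mem _
  refine ⟨ad_preserves h1 ((bw_comm_num hij.ne) ▸ zero_mem _), fun k => ?_⟩
  by_cases hik : i = k
  · subst hik
    refine ⟨X n (.num j) .beta, mem_fSub_X j, ?_⟩
    rw [lem4a hij.ne]
    exact lie_skew (X n (.num i) .beta) (X n (.num j) .beta)
  · by_cases hjk : j = k
    · subst hjk
      refine ⟨X n (.num i) .beta, mem_fSub_X i, ?_⟩
      rw [lem4b hij.ne]
      exact lie_skew (X n (.num j) .beta) (X n (.num i) .beta)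
    · exact ⟨0, zero_mem _, by
        rw [lie_zero, X_comm (by simpa using hij.ne) (by simpa using hik) (by simp)
          (by simpa using hjk) (by simp) (by simp)]⟩

lemma sSub_le_cent : sSub n ≤ cent n (Xbw n) := by
  apply LieSubalgebra.lieSpan_le.mpr
  rintro w (⟨i, hi, rfl⟩ | ⟨i, j, hij, rfl⟩)
  · exact bw_comm_alpha i
  · exact bw_comm_num hij.ne

lemma sSub_le_Dsub : sSub n ≤ Dsub n := by
  apply LieSubalgebra.lieSpan_le.mpr
  rintro w (⟨i, hi, rfl⟩ | ⟨i, j, hij, rfl⟩)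
  · exact genA_mem_Dsub i
  · exact genN_mem_Dsub hij

end Aux6
/-- The bracket identities in `p_m` expressing that the adjoint action of `s(p_{m−1})` on
`f_{m−2}` is by tangential derivations, annihilating `X_{βω}`. -/
theorem tangential_action (n : ℕ) (hn : 1 ≤ n) :
    -- `[X_{αi}, X_{βω}] = 0` for `1 ≤ i ≤ n−1`
    (∀ i : Fin n, (i : ℕ) + 1 < n →
      ⁅X n Strand.alpha (Strand.num i), Xbw n⁆ = 0) ∧
    -- `[X_{ij}, X_{βω}] = 0` for `1 ≤ i < j ≤ n`
    (∀ i j : Fin n, i < j →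
      ⁅X n (Strand.num i) (Strand.num j), Xbw n⁆ = 0) ∧
    -- `[X_{αi}, X_{kβ}] = −δ_{ik} [X_{αβ}, X_{kβ}]`
    (∀ i k : Fin n, (i : ℕ) + 1 < n →
      ⁅X n Strand.alpha (Strand.num i), X n (Strand.num k) Strand.beta⁆ =
        -((if i = k then (1 : ℂ) else 0) •
          ⁅X n Strand.alpha Strand.beta, X n (Strand.num k) Strand.beta⁆)) ∧
    -- `[X_{ij}, X_{kβ}] = −[δ_{ik} X_{jβ} + δ_{jk} X_{iβ}, X_{kβ}]`
    (∀ i j k : Fin n, i < j →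
      ⁅X n (Strand.num i) (Strand.num j), X n (Strand.num k) Strand.beta⁆ =
        -⁅(if i = k then (1 : ℂ) else 0) • X n (Strand.num j) Strand.beta +
            (if j = k then (1 : ℂ) else 0) • X n (Strand.num i) Strand.beta,
          X n (Strand.num k) Strand.beta⁆) ∧
    -- `X_{βω}` is annihilated by the adjoint action of `s(p_{m−1})`
    (∀ w ∈ sSub n, ⁅w, Xbw n⁆ = 0) ∧
    -- the adjoint action of `s(p_{m−1})` is tangential: each generator `X_{kβ}` is sent
    -- to a bracket `[X_{kβ}, v]` with `v ∈ f_{m−2}`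
    (∀ w ∈ sSub n, ∀ k : Fin n,
      ∃ v ∈ fSub n,
        ⁅w, X n (Strand.num k) Strand.beta⁆ = ⁅X n (Strand.num k) Strand.beta, v⁆) := by
  refine ⟨fun i _ => bw_comm_alpha i, fun i j hij => bw_comm_num hij.ne,
    fun i k _ => ?_, fun i j k hij => ?_, fun w hw => sSub_le_cent hw,
    fun w hw k => (sSub_le_Dsub hw).2 k⟩
  · by_cases h : i = k
    · subst h
      rw [if_pos rfl, one_smul]
      exact lem3' i
    · rw [if_neg h, zero_smul, neg_zero]
      exact X_comm (by simp) (by simp) (by simp) (by simpa using h) (by simp) (by simp)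
  · by_cases hik : i = k
    · subst hik
      rw [if_pos rfl, if_neg hij.ne', one_smul, zero_smul, add_zero]
      exact lem4a hij.ne
    · by_cases hjk : j = k
      · subst hjk
        rw [if_neg hik, if_pos rfl, one_smul, zero_smul, zero_add]
        exact lem4b hij.ne
      · rw [if_neg hik, if_neg hjk, zero_smul, zero_smul, add_zero, zero_lie, neg_zero]
        exact X_comm (by simpa using hij.ne) (by simpa using hik) (by simp)
          (by simpa using hjk) (by simp) (by simp)
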